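/- For the embedded chain P of the GI/M/1 queue with parameter z > 1, the quantities F_n^{(i)} satisfy F_n^{(i)} = 1/(z·(z−1)^{n−i}) for all 0 ≤ i < n. -/
import Mathlib


open scoped ENNReal
open Filter Topology

/-- Matrix powers of a nonnegative kernel on ℕ, values in `[0,∞]`. -/
noncomputable def matPow (P : ℕ → ℕ → ℝ≥0∞) : ℕ → ℕ → ℕ → ℝ≥0∞
  | 0, i, j => if i = j then 1 else 0
  | k + 1, i, j => ∑' l : ℕ, matPow P k i l * P l j

/-- The potential `φ(i) = ∑_{k=0}^∞ ∑_j P^k(i,j) c(j)`. -/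
noncomputable def potential (P : ℕ → ℕ → ℝ≥0∞) (c : ℕ → ℝ≥0∞) (i : ℕ) : ℝ≥0∞ :=
  ∑' k : ℕ, ∑' j : ℕ, matPow P k i j * c j

/-- The Green matrix `G(i,j) = ∑_{k=0}^∞ P^k(i,j)`. -/
noncomputable def green (P : ℕ → ℕ → ℝ≥0∞) (i j : ℕ) : ℝ≥0∞ :=
  ∑' k : ℕ, matPow P k i j

/-- `P_n^{(k-)} = ∑_{i=0}^k P(n,i)`. -/
noncomputable def Pminus (P : ℕ → ℕ → ℝ≥0∞) (n k : ℕ) : ℝ≥0∞ :=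
  ∑ l ∈ Finset.range (k + 1), P n l

/-- `F P i n = F_n^{(i)}`: `F_i^{(i)} = 1` and
`F_n^{(i)} = (1/P(n,n+1)) ∑_{k=i}^{n-1} P_n^{(k-)} F_k^{(i)}` for `i < n`. -/
noncomputable def F (P : ℕ → ℕ → ℝ≥0∞) (i : ℕ) : ℕ → ℝ≥0∞
  | n =>
    if n ≤ i then 1
    else (P n (n + 1))⁻¹ *
      ∑ k ∈ (Finset.Ico i n).attach, Pminus P n k.1 * F P i k.1
  termination_by n => n
  decreasing_by
    have h := Finset.mem_Ico.mp k.2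
    omega

/-- The embedded chain of the `GI/M/1` queue with parameter `z`:
`P(i,0) = b_i = 1/z^(i+1)`, `P(i,j) = a_{i+1-j} = (z-1)/z^(i+2-j)` for `1 ≤ j ≤ i+1`,
and `P(i,j) = 0` for `j > i+1`. -/
noncomputable def giM1 (z : ℝ) : ℕ → ℕ → ℝ≥0∞ := fun i j =>
  if j = 0 then ENNReal.ofReal (1 / z ^ (i + 1))
  else if j ≤ i + 1 then ENNReal.ofReal ((z - 1) / z ^ (i + 2 - j))
  else 0

section aux
variable {z : ℝ} (hz : 1 < z)

lemma giM1_succ (n : ℕ) : giM1 z n (n + 1) = ENNReal.ofReal ((z - 1) / z) := by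
  simp [giM1]

lemma Pminus_eq (hz : 1 < z) {n k : ℕ} (hk : k ≤ n) :
    Pminus (giM1 z) n k = ENNReal.ofReal (z ^ k / z ^ (n + 1)) := by
  have hz0 : (0:ℝ) < z := lt_trans one_pos hz
  induction k with
  | zero => simp [Pminus, giM1]
  | succ k ih =>
    have hk' : k ≤ n := Nat.le_of_succ_le hk
    rw [Pminus, Finset.sum_range_succ, ← Pminus, ih hk']
    have hP : giM1 z n (k + 1) = ENNReal.ofReal ((z - 1) / z ^ (n + 1 - k)) := by
      have h1 : k + 1 ≤ n + 1 := by omega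
      have h2 : n + 2 - (k + 1) = n + 1 - k := by omega
      simp [giM1, h1, h2]
    rw [hP, ← ENNReal.ofReal_add (by positivity)
      (div_nonneg (by linarith) (by positivity))]
    congr 1
    have he : (n + 1 - k) + k = n + 1 := by omega
    have hpow : z ^ (n + 1 - k) * z ^ k = z ^ (n + 1) := by
      rw [← pow_add, he]
    rw [← hpow]
    have h1 : z ^ (n + 1 - k) ≠ 0 := by positivity
    have h2 : z ^ k ≠ 0 := by positivity
    field_simp
    ring

end aux

theorem giM1_F_formula (z : ℝ) (hz : 1 < z) :
    ∀ i n : ℕ, i < n →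
      F (giM1 z) i n = ENNReal.ofReal (1 / (z * (z - 1) ^ (n - i))) := by
  have hz0 : (0:ℝ) < z := lt_trans one_pos hz
  have hz1 : (0:ℝ) < z - 1 := by linarith
  have hb : ENNReal.ofReal ((z - 1) / z) ≠ 0 := by
    simp [ENNReal.ofReal_eq_zero]; positivity
  have hb' : ENNReal.ofReal ((z - 1) / z) ≠ ⊤ := ENNReal.ofReal_ne_top
  have hinv : (ENNReal.ofReal ((z - 1) / z))⁻¹ = ENNReal.ofReal (z / (z - 1)) := by
    rw [← ENNReal.ofReal_inv_of_pos (by positivity), inv_div]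
  intro i n hin
  induction n, hin using Nat.le_induction with
  | base =>
    -- n = i + 1
    rw [F]
    have h1 : ¬ (i + 1 ≤ i) := by omega
    rw [if_neg h1, Finset.sum_attach _ (fun k => Pminus (giM1 z) (i+1) k * F (giM1 z) i k),
      Nat.Ico_succ_singleton, Finset.sum_singleton, giM1_succ, hinv,
      Pminus_eq hz (by omega : i ≤ i + 1)]
    have hFi : F (giM1 z) i i = 1 := by rw [F, if_pos le_rfl]
    rw [hFi, mul_one, ← ENNReal.ofReal_mul (by positivity)]
    have h2 : i + 1 - i = 1 := by omega
    rw [h2]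
    congr 1
    have hp : z ^ (i + 1 + 1) = z ^ i * z ^ 2 := by ring
    rw [hp]
    have hzi : z ^ i ≠ 0 := by positivity
    field_simp
    all_goals ring
  | succ n hn ih =>
    have hne : ¬ (n + 1 ≤ i) := by omega
    rw [F, if_neg hne, Finset.sum_attach _ (fun k => Pminus (giM1 z) (n+1) k * F (giM1 z) i k),
      Finset.sum_Ico_succ_top (by omega : i ≤ n)]
    have hsum : ∑ k ∈ Finset.Ico i n, Pminus (giM1 z) (n+1) k * F (giM1 z) i k
        = ENNReal.ofReal (1/z) * ∑ k ∈ Finset.Ico i n, Pminus (giM1 z) n k * F (giM1 z) i k := by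
      rw [Finset.mul_sum]
      refine Finset.sum_congr rfl fun k hk => ?_
      have hk' : k < n := (Finset.mem_Ico.mp hk).2
      rw [Pminus_eq hz (by omega : k ≤ n + 1), Pminus_eq hz (le_of_lt hk'), ← mul_assoc,
        ← ENNReal.ofReal_mul (by positivity)]
      congr 2
      have hp : z ^ (n + 1 + 1) = z ^ (n + 1) * z := by rw [pow_succ]
      rw [hp]
      have h1 : z ^ (n + 1) ≠ 0 := by positivity
      field_simp
      all_goals ring
    have hS : ∑ k ∈ Finset.Ico i n, Pminus (giM1 z) n k * F (giM1 z) i k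
        = ENNReal.ofReal ((z - 1)/z) * F (giM1 z) i n := by
      conv_rhs => rw [F]
      rw [if_neg (by omega : ¬ (n ≤ i)), giM1_succ, ← mul_assoc,
        ENNReal.mul_inv_cancel hb hb', one_mul,
        Finset.sum_attach _ (fun k => Pminus (giM1 z) n k * F (giM1 z) i k)]
    rw [hsum, hS, Pminus_eq hz (by omega : n ≤ n + 1), ih, giM1_succ, hinv,
      ← ENNReal.ofReal_mul (by positivity), ← ENNReal.ofReal_mul (by positivity),
      ← ENNReal.ofReal_mul (by positivity),
      ← ENNReal.ofReal_add (by positivity) (by positivity),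
      ← ENNReal.ofReal_mul (by positivity)]
    have h2 : n + 1 - i = (n - i) + 1 := by omega
    rw [h2]
    congr 1
    have hp : z ^ (n + 1 + 1) = z ^ n * z ^ 2 := by ring
    have hq : (z - 1) ^ (n - i + 1) = (z - 1) ^ (n - i) * (z - 1) := by rw [pow_succ]
    rw [hp, hq]
    have h1 : z ^ n ≠ 0 := by positivity
    have h3 : (z - 1) ^ (n - i) ≠ 0 := by positivity
    field_simp
    all_goals ring
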